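/- For the exponentially weighted bivariate Hermite coefficient estimators Â_{uv}^{(n)} updated by Â^{(1)} = h_u(x_1)h_v(y_1), Â^{(i)} = (1-λ)Â^{(i-1)} + λh_u(x_i)h_v(y_i), based on i.i.d. observations, the covariance Cov(â_{(1),r}^{(n)}, Â_{uv}^{(n)}) converges to (λ/(2-λ))·Cov(h_r(X), h_u(X)h_v(Y)) as n → ∞, where â_{(1),r}^{(n)} is the analogously updated univariate coefficient based on h_r(x_i). -/

import Mathlib

open MeasureTheory ProbabilityTheory Filter

/-- Physicists' Hermite polynomials, via the recurrence
`H_{k+1}(x) = 2x H_k(x) - 2k H_{k-1}(x)`. -/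
noncomputable def physHermite : ℕ → ℝ → ℝ
  | 0 => fun _ => 1
  | 1 => fun x => 2 * x
  | n + 2 => fun x => 2 * x * physHermite (n + 1) x - 2 * (n + 1 : ℕ) * physHermite n x

/-- Normalized Hermite functions `h_k(x) = (2^k k! √π)^{-1/2} e^{-x²/2} H_k(x)`. -/
noncomputable def hermiteFun (k : ℕ) (x : ℝ) : ℝ :=
  ((2 : ℝ) ^ k * (Nat.factorial k : ℝ) * Real.sqrt Real.pi) ^ (-(1 : ℝ) / 2) *
    Real.exp (-x ^ 2 / 2) * physHermite k x

/-- Exponentially weighted univariate Hermite coefficient estimator: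
`â^{(1)} = h_r(x₁)`, `â^{(i)} = (1-λ)â^{(i-1)} + λ h_r(xᵢ)`. -/
noncomputable def ewCoeff1 {Ω : Type*} (l : ℝ) (X : ℕ → Ω → ℝ) (r : ℕ) : ℕ → Ω → ℝ
  | 0 => fun ω => hermiteFun r (X 0 ω)
  | n + 1 => fun ω => (1 - l) * ewCoeff1 l X r n ω + l * hermiteFun r (X (n + 1) ω)

/-- Exponentially weighted bivariate Hermite coefficient estimator:
`Â^{(1)} = h_u(x₁)h_v(y₁)`, `Â^{(i)} = (1-λ)Â^{(i-1)} + λ h_u(xᵢ)h_v(yᵢ)`. -/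
noncomputable def ewCoeff2 {Ω : Type*} (l : ℝ) (X Y : ℕ → Ω → ℝ) (u v : ℕ) : ℕ → Ω → ℝ
  | 0 => fun ω => hermiteFun u (X 0 ω) * hermiteFun v (Y 0 ω)
  | n + 1 => fun ω =>
      (1 - l) * ewCoeff2 l X Y u v n ω + l * hermiteFun u (X (n + 1) ω) * hermiteFun v (Y (n + 1) ω)

/-- Covariance of two real random variables. -/
noncomputable def cov {Ω : Type*} [MeasurableSpace Ω] (μ : Measure Ω) (f g : Ω → ℝ) : ℝ :=
  ∫ ω, (f ω - ∫ ω', f ω' ∂μ) * (g ω - ∫ ω', g ω' ∂μ) ∂μ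

lemma physHermite_continuous : ∀ k, Continuous (physHermite k) := by
  have H : ∀ k, Continuous (physHermite k) ∧ Continuous (physHermite (k+1)) := by
    intro k
    induction k with
    | zero => exact ⟨by simp [physHermite]; exact continuous_const,
        by simp [physHermite]; exact (continuous_const.mul continuous_id)⟩
    | succ n ih =>
      refine ⟨ih.2, ?_⟩
      show Continuous (physHermite (n+2))
      simp only [physHermite]
      exact ((continuous_const.mul continuous_id).mul ih.2).sub (continuous_const.mul ih.1)
  exact fun k => (H k).1

lemma physHermite_bound : ∀ k, ∃ C : ℝ, 0 ≤ C ∧ ∀ x, |physHermite k x| ≤ C * (1 + |x|) ^ k := by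
  have H : ∀ k, (∃ C : ℝ, 0 ≤ C ∧ ∀ x, |physHermite k x| ≤ C * (1 + |x|) ^ k) ∧
      (∃ C : ℝ, 0 ≤ C ∧ ∀ x, |physHermite (k+1) x| ≤ C * (1 + |x|) ^ (k+1)) := by
    intro k
    induction k with
    | zero =>
      refine ⟨⟨1, zero_le_one, fun x => by simp [physHermite]⟩,
        ⟨2, by norm_num, fun x => ?_⟩⟩
      simp only [physHermite, abs_mul, abs_two]
      have : (1 + |x|)^(0+1) = 1 + |x| := by ring
      rw [this]
      nlinarith [abs_nonneg x]
    | succ n ih =>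
      obtain ⟨⟨C0, hC0, hb0⟩, ⟨C1, hC1, hb1⟩⟩ := ih
      refine ⟨⟨C1, hC1, hb1⟩, ⟨2 * C1 + 2 * (n+1) * C0, by positivity, fun x => ?_⟩⟩
      show |physHermite (n+2) x| ≤ _
      simp only [physHermite]
      have hx1 : (0:ℝ) ≤ 1 + |x| := by linarith [abs_nonneg x]
      have hxx : |x| ≤ 1 + |x| := by linarith
      have h1b := hb1 x
      have h0b := hb0 x
      have hp1 : (0:ℝ) ≤ (1 + |x|) ^ (n+1) := by positivity
      have hp0 : (0:ℝ) ≤ (1 + |x|) ^ n := by positivity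
      have hpow1 : (1 + |x|) * (1 + |x|) ^ (n+1) = (1 + |x|) ^ (n+2) := by ring
      have hmono : (1 + |x|) ^ n ≤ (1 + |x|) ^ (n+2) :=
        pow_le_pow_right₀ (by linarith [abs_nonneg x]) (by omega)
      have h1 : |2 * x * physHermite (n + 1) x| ≤ 2 * C1 * (1 + |x|) ^ (n + 2) := by
        rw [abs_mul, abs_mul, abs_two]
        calc 2 * |x| * |physHermite (n+1) x| ≤ 2 * ((1 + |x|) * (C1 * (1+|x|)^(n+1))) := by
              have h2 : |x| * |physHermite (n+1) x| ≤ (1 + |x|) * (C1 * (1+|x|)^(n+1)) :=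
                mul_le_mul hxx h1b (abs_nonneg _) hx1
              linarith
          _ = 2 * C1 * (1 + |x|) ^ (n + 2) := by ring
      have h2 : |2 * ((n:ℝ)+1) * physHermite n x| ≤ 2 * ((n:ℝ)+1) * C0 * (1 + |x|) ^ (n + 2) := by
        rw [abs_mul]
        have hco : |2 * ((n:ℝ)+1)| = 2 * ((n:ℝ)+1) := abs_of_nonneg (by positivity)
        rw [hco]
        have hstep : |physHermite n x| ≤ C0 * (1 + |x|) ^ (n+2) :=
          h0b.trans (mul_le_mul_of_nonneg_left hmono hC0)
        calc 2 * ((n:ℝ)+1) * |physHermite n x| ≤ 2 * ((n:ℝ)+1) * (C0 * (1+|x|)^(n+2)) :=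
              mul_le_mul_of_nonneg_left hstep (by positivity)
          _ = _ := by ring
      calc |2 * x * physHermite (n + 1) x - 2 * ((n:ℕ)+1 : ℕ) * physHermite n x|
          ≤ |2 * x * physHermite (n + 1) x| + |2 * ((n:ℕ)+1:ℕ) * physHermite n x| := abs_sub _ _
        _ ≤ (2 * C1 + 2 * (n+1) * C0) * (1 + |x|) ^ (n + 2) := by
            push_cast
            push_cast at h2
            nlinarith [h1, h2]
  exact fun k => (H k).1

lemma hermiteFun_continuous (k : ℕ) : Continuous (hermiteFun k) := by
  unfold hermiteFun
  exact (continuous_const.mul (Real.continuous_exp.comp (by fun_prop))).mul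
    (physHermite_continuous k)

lemma hermiteFun_bound (k : ℕ) : ∃ C : ℝ, 0 ≤ C ∧ ∀ x, |hermiteFun k x| ≤ C := by
  obtain ⟨C, hC, hb⟩ := physHermite_bound k
  set c : ℝ := ((2 : ℝ) ^ k * (Nat.factorial k : ℝ) * Real.sqrt Real.pi) ^ (-(1 : ℝ) / 2)
  refine ⟨|c| * (C * ((k.factorial : ℝ) * Real.exp 2)), by positivity, fun x => ?_⟩
  unfold hermiteFun
  rw [abs_mul, abs_mul]
  have h1 : |Real.exp (-x ^ 2 / 2)| = Real.exp (-x ^ 2 / 2) := abs_of_pos (Real.exp_pos _)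
  rw [h1]
  have key : Real.exp (-x ^ 2 / 2) * |physHermite k x| ≤ C * ((k.factorial : ℝ) * Real.exp 2) := by
    have h2 : |physHermite k x| ≤ C * (1 + |x|) ^ k := hb x
    have h3 : (1 + |x|) ^ k ≤ (k.factorial : ℝ) * Real.exp (1 + |x|) := by
      have := Real.pow_div_factorial_le_exp (x := 1 + |x|) (by positivity) k
      have hf : (0:ℝ) < (k.factorial : ℝ) := by positivity
      rw [div_le_iff₀ hf] at this
      linarith
    have h4 : Real.exp (-x ^ 2 / 2) * Real.exp (1 + |x|) ≤ Real.exp 2 := by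
      rw [← Real.exp_add]
      apply Real.exp_le_exp.2
      nlinarith [sq_nonneg (|x| - 1), sq_abs x]
    calc Real.exp (-x ^ 2 / 2) * |physHermite k x|
        ≤ Real.exp (-x ^ 2 / 2) * (C * ((k.factorial : ℝ) * Real.exp (1 + |x|))) := by
          apply mul_le_mul_of_nonneg_left _ (Real.exp_pos _).le
          exact h2.trans (mul_le_mul_of_nonneg_left h3 hC)
      _ = C * (k.factorial : ℝ) * (Real.exp (-x ^ 2 / 2) * Real.exp (1 + |x|)) := by ring
      _ ≤ C * (k.factorial : ℝ) * Real.exp 2 := by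
          apply mul_le_mul_of_nonneg_left h4 (by positivity)
      _ = C * ((k.factorial : ℝ) * Real.exp 2) := by ring
  calc |c| * Real.exp (-x ^ 2 / 2) * |physHermite k x|
      = |c| * (Real.exp (-x ^ 2 / 2) * |physHermite k x|) := by ring
    _ ≤ |c| * (C * ((k.factorial : ℝ) * Real.exp 2)) :=
        mul_le_mul_of_nonneg_left key (abs_nonneg _)

/-- The weights of the EW recursion as an explicit sum. -/
noncomputable def ewWeight (l : ℝ) (n i : ℕ) : ℝ :=
  if i = 0 then (1 - l) ^ n else l * (1 - l) ^ (n - i)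

lemma ewWeight_succ (l : ℝ) {n i : ℕ} (hi : i ≤ n) :
    ewWeight l (n + 1) i = (1 - l) * ewWeight l n i := by
  unfold ewWeight
  by_cases h : i = 0
  · simp [h, pow_succ]; ring
  · simp only [h, if_false]
    have : n + 1 - i = (n - i) + 1 := by omega
    rw [this, pow_succ]; ring

lemma ewWeight_last (l : ℝ) (n : ℕ) : ewWeight l (n + 1) (n + 1) = l := by
  simp [ewWeight]

lemma ewCoeff1_eq {Ω : Type*} (l : ℝ) (X : ℕ → Ω → ℝ) (r : ℕ) (n : ℕ) :
    ewCoeff1 l X r n = fun ω =>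
      ∑ i ∈ Finset.range (n + 1), ewWeight l n i * hermiteFun r (X i ω) := by
  induction n with
  | zero => funext ω; simp [ewCoeff1, ewWeight]
  | succ n ih =>
    funext ω
    show (1 - l) * ewCoeff1 l X r n ω + l * hermiteFun r (X (n + 1) ω) = _
    rw [ih, Finset.sum_range_succ, ewWeight_last, Finset.mul_sum]
    congr 1
    apply Finset.sum_congr rfl
    intro i hi
    rw [ewWeight_succ l (Finset.mem_range_succ_iff.1 hi)]
    ring

lemma ewCoeff2_eq {Ω : Type*} (l : ℝ) (X Y : ℕ → Ω → ℝ) (u v : ℕ) (n : ℕ) :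
    ewCoeff2 l X Y u v n = fun ω =>
      ∑ i ∈ Finset.range (n + 1),
        ewWeight l n i * (hermiteFun u (X i ω) * hermiteFun v (Y i ω)) := by
  induction n with
  | zero => funext ω; simp [ewCoeff2, ewWeight]
  | succ n ih =>
    funext ω
    show (1 - l) * ewCoeff2 l X Y u v n ω + l * hermiteFun u (X (n+1) ω) * hermiteFun v (Y (n+1) ω) = _
    rw [ih, Finset.sum_range_succ, ewWeight_last, Finset.mul_sum]
    rw [← mul_assoc]
    congr 1
    apply Finset.sum_congr rfl
    intro i hi
    rw [ewWeight_succ l (Finset.mem_range_succ_iff.1 hi)]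
    ring

lemma cov_eq {Ω : Type*} [MeasurableSpace Ω] (μ : Measure Ω) [IsProbabilityMeasure μ]
    {f g : Ω → ℝ} (hf : Integrable f μ) (hg : Integrable g μ)
    (hfg : Integrable (fun ω => f ω * g ω) μ) :
    cov μ f g = (∫ ω, f ω * g ω ∂μ) - (∫ ω, f ω ∂μ) * (∫ ω, g ω ∂μ) := by
  unfold cov
  set c := ∫ ω, f ω ∂μ
  set d := ∫ ω, g ω ∂μ
  have h1 : (fun ω => (f ω - c) * (g ω - d)) =
      fun ω => f ω * g ω - (c * g ω + d * f ω - c * d) := by funext ω; ring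
  have I2 : Integrable (fun ω => c * g ω + d * f ω) μ := (hg.const_mul c).add (hf.const_mul d)
  have I1 : Integrable (fun ω => c * g ω + d * f ω - c * d) μ := I2.sub (integrable_const _)
  rw [h1, integral_sub hfg I1, integral_sub I2 (integrable_const _),
    integral_add (hg.const_mul c) (hf.const_mul d), MeasureTheory.integral_const_mul, MeasureTheory.integral_const_mul,
    integral_const]
  simp only [probReal_univ, smul_eq_mul, one_mul]
  ring

lemma integrable_of_bounded {Ω : Type*} [MeasurableSpace Ω] {μ : Measure Ω}
    [IsProbabilityMeasure μ] {f : Ω → ℝ} (hf : Measurable f) {C : ℝ} (hb : ∀ ω, |f ω| ≤ C) :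
    Integrable f μ := by
  refine ⟨hf.aestronglyMeasurable, ?_⟩
  refine HasFiniteIntegral.mono' (g := fun _ => C) (hasFiniteIntegral_const C) ?_
  exact Filter.Eventually.of_forall fun ω => by simpa using hb ω

lemma cov_sum_iid {Ω : Type*} [MeasurableSpace Ω] (μ : Measure Ω) [IsProbabilityMeasure μ]
    (Z : ℕ → Ω → ℝ × ℝ) (hZ : ∀ i, Measurable (Z i))
    (hind : iIndepFun Z μ)
    (hid : ∀ i, IdentDistrib (Z i) (Z 0) μ μ)
    (F G : ℝ × ℝ → ℝ) (hF : Measurable F) (hG : Measurable G)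
    (CF CG : ℝ) (hFb : ∀ p, |F p| ≤ CF) (hGb : ∀ p, |G p| ≤ CG)
    (a : ℕ → ℝ) (m : ℕ) :
    cov μ (fun ω => ∑ i ∈ Finset.range m, a i * F (Z i ω))
        (fun ω => ∑ i ∈ Finset.range m, a i * G (Z i ω)) =
      (∑ i ∈ Finset.range m, (a i) ^ 2) *
        cov μ (fun ω => F (Z 0 ω)) (fun ω => G (Z 0 ω)) := by
  -- basic integrability
  have intF : ∀ i, Integrable (fun ω => F (Z i ω)) μ := fun i =>
    integrable_of_bounded (hF.comp (hZ i)) (fun ω => hFb _)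
  have intG : ∀ i, Integrable (fun ω => G (Z i ω)) μ := fun i =>
    integrable_of_bounded (hG.comp (hZ i)) (fun ω => hGb _)
  have intFG : ∀ i j, Integrable (fun ω => F (Z i ω) * G (Z j ω)) μ := fun i j => by
    refine integrable_of_bounded ((hF.comp (hZ i)).mul (hG.comp (hZ j))) (C := |CF| * |CG|)
      (fun ω => ?_)
    rw [abs_mul]
    exact mul_le_mul ((hFb _).trans (le_abs_self _)) ((hGb _).trans (le_abs_self _))
      (abs_nonneg _) (abs_nonneg _)
  -- per-index covariance
  have hdiag : ∀ i, (∫ ω, F (Z i ω) * G (Z i ω) ∂μ) - (∫ ω, F (Z i ω) ∂μ) * (∫ ω, G (Z i ω) ∂μ)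
      = cov μ (fun ω => F (Z 0 ω)) (fun ω => G (Z 0 ω)) := by
    intro i
    have e1 : (∫ ω, F (Z i ω) * G (Z i ω) ∂μ) = ∫ ω, F (Z 0 ω) * G (Z 0 ω) ∂μ :=
      ((hid i).comp (hF.mul hG)).integral_eq
    have e2 : (∫ ω, F (Z i ω) ∂μ) = ∫ ω, F (Z 0 ω) ∂μ := ((hid i).comp hF).integral_eq
    have e3 : (∫ ω, G (Z i ω) ∂μ) = ∫ ω, G (Z 0 ω) ∂μ := ((hid i).comp hG).integral_eq
    rw [e1, e2, e3, cov_eq μ (intF 0) (intG 0) (intFG 0 0)]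
  have hoff : ∀ i j, i ≠ j → (∫ ω, F (Z i ω) * G (Z j ω) ∂μ)
      = (∫ ω, F (Z i ω) ∂μ) * (∫ ω, G (Z j ω) ∂μ) := by
    intro i j hij
    exact ((hind.indepFun hij).comp hF hG).integral_mul_eq_mul_integral (intF i).aestronglyMeasurable (intG j).aestronglyMeasurable
  -- expand the covariance of the sums
  have intSum1 : Integrable (fun ω => ∑ i ∈ Finset.range m, a i * F (Z i ω)) μ :=
    MeasureTheory.integrable_finset_sum _ (fun i _ => (intF i).const_mul (a i))
  have intSum2 : Integrable (fun ω => ∑ i ∈ Finset.range m, a i * G (Z i ω)) μ :=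
    MeasureTheory.integrable_finset_sum _ (fun i _ => (intG i).const_mul (a i))
  have intSum12 : Integrable (fun ω =>
      (∑ i ∈ Finset.range m, a i * F (Z i ω)) * (∑ i ∈ Finset.range m, a i * G (Z i ω))) μ := by
    have : (fun ω => (∑ i ∈ Finset.range m, a i * F (Z i ω)) *
        (∑ j ∈ Finset.range m, a j * G (Z j ω))) = fun ω =>
        ∑ i ∈ Finset.range m, ∑ j ∈ Finset.range m,
          (a i * a j) * (F (Z i ω) * G (Z j ω)) := by
      funext ω
      rw [Finset.sum_mul_sum]
      apply Finset.sum_congr rfl; intro i _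
      apply Finset.sum_congr rfl; intro j _
      ring
    rw [this]
    exact MeasureTheory.integrable_finset_sum _ (fun i _ =>
      MeasureTheory.integrable_finset_sum _ (fun j _ => (intFG i j).const_mul _))
  rw [cov_eq μ intSum1 intSum2 intSum12]
  have eProd : (∫ ω, (∑ i ∈ Finset.range m, a i * F (Z i ω)) *
      (∑ i ∈ Finset.range m, a i * G (Z i ω)) ∂μ) =
      ∑ i ∈ Finset.range m, ∑ j ∈ Finset.range m,
        (a i * a j) * ∫ ω, F (Z i ω) * G (Z j ω) ∂μ := by
    have h1 : (fun ω => (∑ i ∈ Finset.range m, a i * F (Z i ω)) *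
        (∑ j ∈ Finset.range m, a j * G (Z j ω))) = fun ω =>
        ∑ i ∈ Finset.range m, ∑ j ∈ Finset.range m,
          (a i * a j) * (F (Z i ω) * G (Z j ω)) := by
      funext ω
      rw [Finset.sum_mul_sum]
      apply Finset.sum_congr rfl; intro i _
      apply Finset.sum_congr rfl; intro j _
      ring
    calc (∫ ω, (∑ i ∈ Finset.range m, a i * F (Z i ω)) *
        (∑ i ∈ Finset.range m, a i * G (Z i ω)) ∂μ)
        = ∫ ω, ∑ i ∈ Finset.range m, ∑ j ∈ Finset.range m,
            (a i * a j) * (F (Z i ω) * G (Z j ω)) ∂μ := by rw [h1]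
      _ = ∑ i ∈ Finset.range m, ∫ ω, ∑ j ∈ Finset.range m,
            (a i * a j) * (F (Z i ω) * G (Z j ω)) ∂μ :=
          integral_finset_sum _ (fun i _ => MeasureTheory.integrable_finset_sum _
            (fun j _ => (intFG i j).const_mul _))
      _ = ∑ i ∈ Finset.range m, ∑ j ∈ Finset.range m,
            (a i * a j) * ∫ ω, F (Z i ω) * G (Z j ω) ∂μ := by
          apply Finset.sum_congr rfl; intro i _
          rw [integral_finset_sum _ (fun j _ => (intFG i j).const_mul _)]
          apply Finset.sum_congr rfl; intro j _
          rw [MeasureTheory.integral_const_mul]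
  have eInt1 : (∫ ω, ∑ i ∈ Finset.range m, a i * F (Z i ω) ∂μ) =
      ∑ i ∈ Finset.range m, a i * ∫ ω, F (Z i ω) ∂μ := by
    rw [integral_finset_sum _ (fun i _ => (intF i).const_mul _)]
    exact Finset.sum_congr rfl fun i _ => MeasureTheory.integral_const_mul _ _
  have eInt2 : (∫ ω, ∑ i ∈ Finset.range m, a i * G (Z i ω) ∂μ) =
      ∑ i ∈ Finset.range m, a i * ∫ ω, G (Z i ω) ∂μ := by
    rw [integral_finset_sum _ (fun i _ => (intG i).const_mul _)]
    exact Finset.sum_congr rfl fun i _ => MeasureTheory.integral_const_mul _ _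
  rw [eProd, eInt1, eInt2, Finset.sum_mul_sum]
  rw [← Finset.sum_sub_distrib]
  have : ∀ i ∈ Finset.range m,
      (∑ j ∈ Finset.range m, (a i * a j) * ∫ ω, F (Z i ω) * G (Z j ω) ∂μ) -
      (∑ j ∈ Finset.range m, (a i * ∫ ω, F (Z i ω) ∂μ) * (a j * ∫ ω, G (Z j ω) ∂μ)) =
      (a i) ^ 2 * cov μ (fun ω => F (Z 0 ω)) (fun ω => G (Z 0 ω)) := by
    intro i _
    rw [← Finset.sum_sub_distrib]
    rw [Finset.sum_eq_single_of_mem i (by assumption)]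
    · rw [← hdiag i]; ring
    · intro j _ hji
      rw [hoff i j (Ne.symm hji)]
      ring
  rw [Finset.sum_congr rfl this, ← Finset.sum_mul]

lemma ewWeight_sq_sum (l : ℝ) (hl : l ≠ 2) (n : ℕ) :
    ∑ i ∈ Finset.range (n + 1), (ewWeight l n i) ^ 2 =
      l / (2 - l) + ((1 - l) ^ 2) ^ n * (1 - l / (2 - l)) := by
  have h2l : (2 : ℝ) - l ≠ 0 := sub_ne_zero.2 (Ne.symm hl)
  induction n with
  | zero =>
    simp [ewWeight]
  | succ n ih =>
    rw [Finset.sum_range_succ, ewWeight_last]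
    have : ∑ i ∈ Finset.range (n + 1), (ewWeight l (n + 1) i) ^ 2 =
        (1 - l) ^ 2 * ∑ i ∈ Finset.range (n + 1), (ewWeight l n i) ^ 2 := by
      rw [Finset.mul_sum]
      apply Finset.sum_congr rfl
      intro i hi
      rw [ewWeight_succ l (Finset.mem_range_succ_iff.1 hi)]
      ring
    rw [this, ih]
    field_simp
    ring

/-- for i.i.d. observations from a bivariate density `f`, the covariance of the
exponentially weighted univariate coefficient `â_{(1),r}^{(n)}` and bivariate coefficient
`Â_{uv}^{(n)}` converges to `(λ/(2-λ))·Cov(h_r(X), h_u(X)h_v(Y))` as `n → ∞`. -/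
theorem ew_hermite_coeff_cov_tendsto {Ω : Type*} [MeasurableSpace Ω] (μ : Measure Ω)
    [IsProbabilityMeasure μ] (X Y : ℕ → Ω → ℝ)
    (hX : ∀ i, Measurable (X i)) (hY : ∀ i, Measurable (Y i))
    (f : ℝ → ℝ → ℝ)
    (hindep : iIndepFun (fun i ω => (X i ω, Y i ω)) μ)
    (hident : ∀ i, IdentDistrib (fun ω => (X i ω, Y i ω)) (fun ω => (X 0 ω, Y 0 ω)) μ μ)
    (hdens : Measure.map (fun ω => (X 0 ω, Y 0 ω)) μ =
      (volume : Measure (ℝ × ℝ)).withDensity (fun p => ENNReal.ofReal (f p.1 p.2)))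
    (l : ℝ) (hl0 : 0 < l) (hl1 : l < 1) (r u v : ℕ) :
    Tendsto (fun n => cov μ (ewCoeff1 l X r n) (ewCoeff2 l X Y u v n)) atTop
      (nhds (l / (2 - l) *
        cov μ (fun ω => hermiteFun r (X 0 ω))
          (fun ω => hermiteFun u (X 0 ω) * hermiteFun v (Y 0 ω)))) := by
  obtain ⟨Cr, hCr0, hCr⟩ := hermiteFun_bound r
  obtain ⟨Cu, hCu0, hCu⟩ := hermiteFun_bound u
  obtain ⟨Cv, hCv0, hCv⟩ := hermiteFun_bound v
  set C := cov μ (fun ω => hermiteFun r (X 0 ω))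
    (fun ω => hermiteFun u (X 0 ω) * hermiteFun v (Y 0 ω)) with hC
  have key : ∀ n, cov μ (ewCoeff1 l X r n) (ewCoeff2 l X Y u v n) =
      (∑ i ∈ Finset.range (n + 1), (ewWeight l n i) ^ 2) * C := by
    intro n
    rw [ewCoeff1_eq, ewCoeff2_eq]
    exact cov_sum_iid μ (fun i ω => (X i ω, Y i ω))
      (fun i => (hX i).prodMk (hY i)) hindep hident
      (fun p => hermiteFun r p.1) (fun p => hermiteFun u p.1 * hermiteFun v p.2)
      (((hermiteFun_continuous r).measurable).comp measurable_fst)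
      ((((hermiteFun_continuous u).measurable).comp measurable_fst).mul
        (((hermiteFun_continuous v).measurable).comp measurable_snd))
      Cr (Cu * Cv) (fun p => hCr _)
      (fun p => by
        rw [abs_mul]
        exact mul_le_mul (hCu _) (hCv _) (abs_nonneg _) hCu0)
      (ewWeight l n) (n + 1)
  simp only [key]
  have hl2 : l ≠ 2 := by linarith
  have hq0 : (0:ℝ) ≤ (1 - l) ^ 2 := sq_nonneg _
  have hq1 : (1 - l) ^ 2 < 1 := by nlinarith
  have hlim : Tendsto (fun n => ∑ i ∈ Finset.range (n + 1), (ewWeight l n i) ^ 2)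
      atTop (nhds (l / (2 - l))) := by
    simp only [ewWeight_sq_sum l hl2]
    have h1 : Tendsto (fun n : ℕ => ((1 - l) ^ 2) ^ n) atTop (nhds 0) :=
      tendsto_pow_atTop_nhds_zero_of_lt_one hq0 hq1
    have := (tendsto_const_nhds (x := l / (2 - l)) (f := atTop (α := ℕ))).add
      (h1.mul_const (1 - l / (2 - l)))
    simpa using this
  simpa using hlim.mul_const C
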